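/- For all integers j, j′ ≥ 0 with jm ≤ n and j′m ≤ n: (1) X_{j′} ⊆ X_j if and only if j′ ≥ j; (2) X_{j′} ⊊ X_j if and only if X_{j′} ⊆ X_{j+1} (where X_{j+1} = ∅ if (j+1)m > n). -/

import Mathlib

/- Statement 3: inclusion criterion for the strata `X_j ⊆ ℂ^n_0` (the case `ℓ = 1`). -/

/-- The stratum `X_j ⊆ ℂ^n_0 = {x : ∑ x_i = 0}`: the set of points of `ℂ^n_0` having `j`
disjoint collections of `m` equal coordinates.  (For `jm > n` the set is empty.) -/
def Xj (n m j : ℕ) : Set (Fin n → ℂ) :=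
  {x | (∑ i, x i) = 0 ∧ ∃ B : Fin j → Finset (Fin n),
    (∀ t, (B t).card = m) ∧ (∀ t t', t ≠ t' → Disjoint (B t) (B t')) ∧
    (∀ t, ∀ i ∈ B t, ∀ i' ∈ B t, x i = x i')}

lemma Xj_anti (n m : ℕ) {j j' : ℕ} (h : j ≤ j') : Xj n m j' ⊆ Xj n m j := by
  rintro x ⟨hsum, B, hcard, hdisj, hconst⟩
  refine ⟨hsum, fun t => B (Fin.castLE h t), fun t => hcard _,
    fun t t' ht => hdisj _ _ ?_, fun t => hconst _⟩
  intro e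
  exact ht (by simpa [Fin.ext_iff] using e)

lemma Xj_le (n m : ℕ) {j : ℕ} {x : Fin n → ℂ} (hx : x ∈ Xj n m j) : j * m ≤ n := by
  obtain ⟨-, B, hcard, hdisj, -⟩ := hx
  calc j * m = ∑ _t : Fin j, m := by simp [mul_comm]
    _ = ∑ t : Fin j, (B t).card := by simp [hcard]
    _ = (Finset.univ.biUnion B).card :=
        (Finset.card_biUnion (fun t _ t' _ h => hdisj t t' h)).symm
    _ ≤ n := by simpa using Finset.card_le_univ (Finset.univ.biUnion B)

/-- The level function: levels `0, …, j'-1` each of size `m`, and singleton levels above. -/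
private def lev (m j' a : ℕ) : ℕ := if a < j' * m then a / m else a - j' * m + j'

private lemma lev_eq {m j' : ℕ} (hm0 : 0 < m) {a b : ℕ} (hab : a ≠ b)
    (h : lev m j' a = lev m j' b) :
    a < j' * m ∧ b < j' * m ∧ a / m = b / m := by
  unfold lev at h
  by_cases ha : a < j' * m <;> by_cases hb : b < j' * m <;> simp [ha, hb] at h
  · exact ⟨ha, hb, h⟩
  · have h1 : a / m < j' := (Nat.div_lt_iff_lt_mul hm0).mpr ha
    omega
  · have h1 : b / m < j' := (Nat.div_lt_iff_lt_mul hm0).mpr hb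
    omega
  · omega

lemma Xj_witness (n m j' : ℕ) (hm : 2 ≤ m) (hn : 1 ≤ n) (hj' : j' * m ≤ n) :
    ∃ x, x ∈ Xj n m j' ∧ ∀ j, j' < j → x ∉ Xj n m j := by
  have hm0 : 0 < m := by omega
  set c : ℂ := (∑ k : Fin n, (lev m j' k : ℂ)) / n with hc
  set x : Fin n → ℂ := fun i => (lev m j' i : ℂ) - c with hx
  have hn0 : (n : ℂ) ≠ 0 := Nat.cast_ne_zero.mpr (by omega)
  -- equal values of x force equal levels
  have hxlev : ∀ i i' : Fin n, x i = x i' → lev m j' i = lev m j' i' := by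
    intro i i' h
    simp only [hx] at h
    have : ((lev m j' i : ℂ)) = (lev m j' i' : ℂ) := sub_left_inj.mp h
    exact_mod_cast this
  refine ⟨x, ⟨?_, ?_⟩, ?_⟩
  · simp only [hx]
    rw [Finset.sum_sub_distrib, Finset.sum_const, Finset.card_univ, Fintype.card_fin,
        nsmul_eq_mul, hc, mul_div_cancel₀ _ hn0, sub_self]
  · -- the blocks
    have hpf : ∀ (t : Fin j') (s : Fin m), (t : ℕ) * m + (s : ℕ) < n := by
      intro t s
      have h1 : (t : ℕ) * m + (s : ℕ) < ((t : ℕ) + 1) * m := by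
        have := s.isLt; nlinarith
      have h2 : ((t : ℕ) + 1) * m ≤ j' * m :=
        Nat.mul_le_mul_right m t.isLt
      omega
    refine ⟨fun t => Finset.univ.map ⟨fun s : Fin m => ⟨(t : ℕ) * m + s, hpf t s⟩,
      fun s s' e => by
        have : (t : ℕ) * m + (s : ℕ) = (t : ℕ) * m + (s' : ℕ) := by
          simpa [Fin.ext_iff] using e
        exact Fin.ext (by omega)⟩, ?_, ?_, ?_⟩
    · intro t; simp
    · -- disjoint
      intro t t' ht
      rw [Finset.disjoint_left]
      rintro i hi hi'
      simp only [Finset.mem_map, Function.Embedding.coeFn_mk] at hi hi'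
      obtain ⟨s, -, rfl⟩ := hi
      obtain ⟨s', -, e⟩ := hi'
      have e' : (t' : ℕ) * m + (s' : ℕ) = (t : ℕ) * m + (s : ℕ) := by
        exact congrArg Fin.val e
      apply ht
      have hs := s.isLt; have hs' := s'.isLt
      have : (t : ℕ) = (t' : ℕ) := by
        rcases Nat.lt_trichotomy (t : ℕ) (t' : ℕ) with h | h | h
        · exfalso; nlinarith [Nat.succ_le_of_lt h, Nat.mul_le_mul_right m (Nat.succ_le_of_lt h)]
        · exact h
        · exfalso; nlinarith [Nat.mul_le_mul_right m (Nat.succ_le_of_lt h)]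
      exact Fin.ext this
    · -- constant on each block
      intro t i hi i' hi'
      simp only [Finset.mem_map, Function.Embedding.coeFn_mk] at hi hi'
      obtain ⟨s, -, rfl⟩ := hi
      obtain ⟨s', -, rfl⟩ := hi'
      have key : ∀ s₀ : Fin m, lev m j' ((t : ℕ) * m + (s₀ : ℕ)) = (t : ℕ) := by
        intro s₀
        have hlt : (t : ℕ) * m + (s₀ : ℕ) < j' * m := by
          have h2 : ((t : ℕ) + 1) * m ≤ j' * m := Nat.mul_le_mul_right m t.isLt
          have := s₀.isLt; nlinarith
        unfold lev
        rw [if_pos hlt, add_comm, Nat.add_mul_div_right _ _ hm0, Nat.div_eq_of_lt s₀.isLt]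
        omega
      simp only [hx]
      exact congrArg (fun k : ℕ => (k : ℂ) - c) ((key s).trans (key s').symm)
  · -- x ∉ Xj n m j for j > j'
    rintro j hjj' ⟨-, B, hcard, hdisj, hconst⟩
    -- each block has two distinct elements
    have htwo : ∀ t : Fin j, ∃ i₁ ∈ B t, ∃ i₂ ∈ B t, i₁ ≠ i₂ := by
      intro t
      apply Finset.one_lt_card.mp
      rw [hcard t]; omega
    -- every element of a block lies below j'*m and its level (quotient) is shared
    have hblock : ∀ t : Fin j, ∀ i ∈ B t, (i : ℕ) < j' * m := by
      intro t i hi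
      obtain ⟨i₁, h₁, i₂, h₂, hne⟩ := htwo t
      rcases eq_or_ne i i₁ with rfl | hne'
      · exact (lev_eq hm0 (fun e => hne (Fin.ext e))
          (hxlev _ _ (hconst t _ hi _ h₂))).1
      · exact (lev_eq hm0 (fun e => hne' (Fin.ext e))
          (hxlev _ _ (hconst t _ hi _ h₁))).1
    -- the common quotient of a block
    choose i₁ hi₁ i₂ hi₂ hne using htwo
    set q : Fin j → ℕ := fun t => (i₁ t : ℕ) / m with hq
    have hqlt : ∀ t, q t < j' := by
      intro t
      exact (Nat.div_lt_iff_lt_mul hm0).mpr (hblock t _ (hi₁ t))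
    have hqall : ∀ t : Fin j, ∀ i ∈ B t, (i : ℕ) / m = q t := by
      intro t i hi
      rcases eq_or_ne i (i₁ t) with rfl | hne'
      · rfl
      · exact (lev_eq hm0 (fun e => hne' (Fin.ext e))
          (hxlev _ _ (hconst t _ hi _ (hi₁ t)))).2.2
    -- each block is contained in the fiber of q t, which has at most m elements
    have hfiber : ∀ a : ℕ, (Finset.univ.filter (fun i : Fin n => (i : ℕ) / m = a)).card ≤ m := by
      intro a
      have : (Finset.univ.filter (fun i : Fin n => (i : ℕ) / m = a)).card ≤
          (Finset.univ : Finset (Fin m)).card := by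
        apply Finset.card_le_card_of_injOn (fun i : Fin n => (⟨(i : ℕ) % m, Nat.mod_lt _ hm0⟩ : Fin m))
        · intro i _; exact Finset.mem_univ _
        · intro i hi i' hi' e
          simp only [Finset.mem_coe, Finset.mem_filter] at hi hi'
          have e' : (i : ℕ) % m = (i' : ℕ) % m := by simpa [Fin.ext_iff] using e
          refine Fin.ext ?_
          rw [← Nat.div_add_mod (i : ℕ) m, ← Nat.div_add_mod (i' : ℕ) m, hi.2, hi'.2, e']
      simpa using this
    -- q is injective
    have hqinj : Function.Injective q := by
      intro t t' he
      by_contra hne'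
      have hsub : ∀ {u : Fin j}, q u = q t → B u ⊆ Finset.univ.filter
          (fun i : Fin n => (i : ℕ) / m = q t) := by
        intro u hu i hi
        simp only [Finset.mem_filter]
        exact ⟨Finset.mem_univ _, by rw [hqall u i hi, hu]⟩
      have hdis := hdisj t t' hne'
      have hcup : (B t ∪ B t').card = 2 * m := by
        rw [Finset.card_union_of_disjoint hdis, hcard, hcard]; ring
      have : (B t ∪ B t').card ≤ m := by
        refine le_trans (Finset.card_le_card ?_) (hfiber (q t))
        exact Finset.union_subset (hsub rfl) (hsub he.symm)
      omega
    have := Fintype.card_le_of_injective (fun t : Fin j => (⟨q t, hqlt t⟩ : Fin j'))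
      (fun t t' e => hqinj (by simpa [Fin.ext_iff] using e))
    simp at this
    omega

lemma Xj_subset_iff (n m : ℕ) (hm : 2 ≤ m) (hn : 1 ≤ n) {a b : ℕ}
    (ha : a * m ≤ n) (hb : b * m ≤ n) : Xj n m b ⊆ Xj n m a ↔ a ≤ b := by
  constructor
  · intro hsub
    by_contra h
    push_neg at h
    obtain ⟨x, hx, hnot⟩ := Xj_witness n m b hm hn hb
    exact hnot a h (hsub hx)
  · exact Xj_anti n m

theorem statement_3 (n m : ℕ) (hn : 1 ≤ n) (hm : 2 ≤ m)
    (j j' : ℕ) (hj : j * m ≤ n) (hj' : j' * m ≤ n) :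
    (Xj n m j' ⊆ Xj n m j ↔ j ≤ j') ∧
    (Xj n m j' ⊂ Xj n m j ↔ Xj n m j' ⊆ Xj n m (j + 1)) := by
  refine ⟨Xj_subset_iff n m hm hn hj hj', ?_⟩
  have hss : Xj n m j' ⊂ Xj n m j ↔ j < j' := by
    rw [Set.ssubset_iff_subset_ne]
    constructor
    · rintro ⟨hsub, hne⟩
      have h1 : j ≤ j' := (Xj_subset_iff n m hm hn hj hj').mp hsub
      rcases lt_or_eq_of_le h1 with h | h
      · exact h
      · exact absurd (h ▸ rfl) hne
    · intro h
      refine ⟨Xj_anti n m h.le, ?_⟩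
      intro he
      have : Xj n m j ⊆ Xj n m j' := he ▸ subset_rfl
      have := (Xj_subset_iff n m hm hn hj' hj).mp this
      omega
  rw [hss]
  by_cases h : (j + 1) * m ≤ n
  · rw [Xj_subset_iff n m hm hn h hj']
    omega
  · constructor
    · intro hlt
      exfalso
      have : (j + 1) * m ≤ j' * m := Nat.mul_le_mul_right m hlt
      omega
    · intro hsub
      exfalso
      obtain ⟨x, hx, -⟩ := Xj_witness n m j' hm hn hj'
      exact h (Xj_le n m (hsub hx))
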